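/- For any odd prime p and any real X ≥ 1, the sum of the Legendre symbol (-D/p) over all fundamental discriminants -D with X ≤ D ≤ 2X is O(p √X); more precisely its absolute value is at most 32 p √X. -/

import Mathlib

/-- A negative fundamental discriminant is either `-d` with `d` squarefree and
`-d ≡ 1 (mod 4)`, or `-4d` with `d` squarefree and `-d ≡ 2, 3 (mod 4)`. -/
def IsFundamentalDiscriminant (n : ℤ) : Prop :=
  (Squarefree n ∧ n % 4 = 1) ∨
    (∃ d : ℤ, n = 4 * d ∧ Squarefree d ∧ (d % 4 = 2 ∨ d % 4 = 3))

open Finset ArithmeticFunction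
open scoped ArithmeticFunction.Moebius

section Helpers

variable {p : ℕ} [hpp : Fact p.Prime]


/-- Legendre symbol has absolute value at most 1. -/
lemma leg_abs_le_one (a : ℤ) : |legendreSym p a| ≤ 1 := by
  by_cases h : (a : ZMod p) = 0
  · rw [(legendreSym.eq_zero_iff p a).mpr h]; norm_num
  · rcases legendreSym.eq_one_or_neg_one p h with h' | h' <;> rw [h'] <;> norm_num

/-- Complete character sum over an AP with difference 4 vanishes. -/
lemma complete_sum (hp : p ≠ 2) (c : ℕ) :
    ∑ t ∈ range p, legendreSym p ((c + 4 * t : ℕ) : ℤ) = 0 := by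
  have h2 : (2 : ZMod p) ≠ 0 := by
    intro h
    have hd : p ∣ 2 := (ZMod.natCast_eq_zero_iff 2 p).mp (by exact_mod_cast h)
    exact hp ((Nat.prime_dvd_prime_iff_eq hpp.out Nat.prime_two).mp hd)
  have h4 : (4 : ZMod p) ≠ 0 := by
    have : (4 : ZMod p) = 2 * 2 := by norm_num
    rw [this]; exact mul_ne_zero h2 h2
  have key : ∀ a : ℤ, legendreSym p a = quadraticChar (ZMod p) (a : ZMod p) := fun a => rfl
  simp_rw [key]
  have step1 : ∑ t ∈ range p, quadraticChar (ZMod p) (((c + 4 * t : ℕ) : ℤ) : ZMod p)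
      = ∑ x : ZMod p, quadraticChar (ZMod p) ((c : ZMod p) + 4 * x) := by
    refine Finset.sum_nbij' (fun t => (t : ZMod p)) (fun x => x.val) ?_ ?_ ?_ ?_ ?_
    · intro t _; exact mem_univ _
    · intro x _; exact mem_range.mpr (ZMod.val_lt x)
    · intro t ht; exact ZMod.val_cast_of_lt (mem_range.mp ht)
    · intro x _; exact ZMod.natCast_val x |>.trans (ZMod.cast_id _ _)
    · intro t _; push_cast; ring_nf
  rw [step1]
  have bij : Function.Bijective (fun x : ZMod p => (c : ZMod p) + 4 * x) := by
    apply Function.bijective_iff_has_inverse.mpr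
    refine ⟨fun y => (y - c) * (4 : ZMod p)⁻¹, fun x => ?_, fun y => ?_⟩
    · field_simp; ring
    · field_simp; ring
  rw [Fintype.sum_bijective _ bij _ (fun x => quadraticChar (ZMod p) x) (fun x => rfl)]
  exact quadraticChar_sum_zero (by rw [ZMod.ringChar_zmod_n]; exact hp)


/-- Sum of the `r mod 4`-restricted Legendre values over a window of length `4p` is zero. -/
lemma window_sum (hp : p ≠ 2) (r : ℕ) (hr : r < 4) (A : ℕ) :
    ∑ n ∈ Ico A (A + 4 * p), (if n % 4 = r then legendreSym p (n : ℤ) else 0) = 0 := by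
  set c := A + ((4 + r - A % 4) % 4) with hc
  have hset : (Ico A (A + 4 * p)).filter (fun n => n % 4 = r)
      = (range p).image (fun t => c + 4 * t) := by
    ext n
    simp only [mem_filter, mem_Ico, mem_image, mem_range]
    constructor
    · rintro ⟨⟨h1, h2⟩, h3⟩
      exact ⟨(n - c) / 4, by omega, by omega⟩
    · rintro ⟨t, ht, rfl⟩
      omega
  rw [← Finset.sum_filter, hset, Finset.sum_image (by intro a _ b _ h; simp only at h; omega)]
  exact complete_sum hp c

/-- Partial sums of a `P`-periodic-with-zero-window, bounded-by-1 function are at most `P`. -/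
lemma partial_sum_bound (f : ℕ → ℤ) (P : ℕ) (hP : 0 < P)
    (h0 : ∀ A, ∑ n ∈ Ico A (A + P), f n = 0) (h1 : ∀ n, |f n| ≤ 1) :
    ∀ B A, |∑ n ∈ Ico A B, f n| ≤ P := by
  intro B
  induction B using Nat.strong_induction_on with
  | _ B ih =>
    intro A
    by_cases h : B ≤ A + P
    · calc |∑ n ∈ Ico A B, f n| ≤ ∑ n ∈ Ico A B, |f n| := Finset.abs_sum_le_sum_abs _ _
        _ ≤ ∑ _n ∈ Ico A B, 1 := Finset.sum_le_sum (fun n _ => h1 n)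
        _ = ((B - A : ℕ) : ℤ) := by rw [Finset.sum_const, Nat.card_Ico]; ring
        _ ≤ P := by omega
    · push_neg at h
      have hsplit : Ico A B = Ico A (B - P) ∪ Ico (B - P) B := by
        rw [Finset.Ico_union_Ico_eq_Ico] <;> omega
      have hdisj : Disjoint (Ico A (B - P)) (Ico (B - P) B) := by
        apply Finset.Ico_disjoint_Ico_consecutive
      rw [hsplit, Finset.sum_union hdisj]
      have h2 : ∑ n ∈ Ico (B - P) B, f n = 0 := by
        have := h0 (B - P); rwa [Nat.sub_add_cancel (by omega)] at this
      rw [h2, add_zero]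
      exact ih (B - P) (by omega) A

/-- `∑_{a² ∣ n, 1 ≤ a ≤ n} μ(a)` is the indicator of `n` squarefree. -/
lemma moebius_sq_sum (n : ℕ) (hn : n ≠ 0) :
    ∑ a ∈ (Icc 1 n).filter (fun a => a ^ 2 ∣ n), μ a
      = if Squarefree n then 1 else 0 := by
  obtain ⟨a₀, b, hab, ha₀⟩ := Nat.sq_mul_squarefree n
  have hb : b ≠ 0 := by rintro rfl; simp at hab; omega
  have ha0 : a₀ ≠ 0 := by rintro rfl; simp at hab; omega
  have hset : (Icc 1 n).filter (fun a => a ^ 2 ∣ n) = b.divisors := by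
    ext d
    simp only [mem_filter, mem_Icc, Nat.mem_divisors]
    constructor
    · rintro ⟨⟨hd1, _⟩, hd2⟩
      refine ⟨?_, hb⟩
      have hd0 : d ≠ 0 := by omega
      rw [← Nat.factorization_le_iff_dvd hd0 hb, Finsupp.le_def]
      intro q
      have h1 : (d ^ 2).factorization ≤ n.factorization :=
        (Nat.factorization_le_iff_dvd (pow_ne_zero 2 hd0) hn).mpr hd2
      have h2 := Finsupp.le_def.mp h1 q
      rw [Nat.factorization_pow] at h2
      have h3 : n.factorization q = 2 * b.factorization q + a₀.factorization q := by
        rw [← hab, Nat.factorization_mul (pow_ne_zero 2 hb) ha0, Nat.factorization_pow]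
        simp [mul_comm]
      have h4 : a₀.factorization q ≤ 1 := ha₀.natFactorization_le_one q
      simp only [Finsupp.smul_apply, smul_eq_mul] at h2 h3
      omega
    · rintro ⟨hdb, -⟩
      have hd0 : d ≠ 0 := by rintro rfl; exact hb (Nat.eq_zero_of_zero_dvd hdb)
      have hdn : d ^ 2 ∣ n := dvd_trans (pow_dvd_pow_of_dvd hdb 2) ⟨a₀, hab.symm⟩
      exact ⟨⟨Nat.one_le_iff_ne_zero.mpr hd0, Nat.le_of_dvd (Nat.pos_of_ne_zero hn)
        (dvd_trans (dvd_pow_self d two_ne_zero) hdn)⟩, hdn⟩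
  rw [hset]
  have hdiv : ∑ d ∈ b.divisors, μ d = if b = 1 then 1 else 0 := by
    have h := congrArg (fun f : ArithmeticFunction ℤ => f b) moebius_mul_coe_zeta
    simp only [coe_mul_zeta_apply, one_apply] at h
    exact h
  rw [hdiv]
  congr 1
  rw [eq_iff_iff]
  constructor
  · rintro rfl; rw [← hab]; simpa using ha₀
  · intro hsq
    have : IsUnit b := hsq b (Dvd.intro_left a₀ (by rw [← hab]; ring))
    exact Nat.isUnit_iff.mp this


/-- Bound for restricted AP sums of Legendre symbols. -/
lemma ap_sum_bound (hp : p ≠ 2) (r : ℕ) (hr : r < 4) (A B : ℕ) :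
    |∑ n ∈ (Ico A B).filter (fun n => n % 4 = r), legendreSym p (n : ℤ)| ≤ 4 * p := by
  rw [Finset.sum_filter]
  have := partial_sum_bound (fun n => if n % 4 = r then legendreSym p (n : ℤ) else 0)
    (4 * p) (by have := hpp.out.pos; omega) (window_sum hp r hr)
    (fun n => by split
                 · exact leg_abs_le_one _
                 · norm_num) B A
  exact_mod_cast this

lemma class_bound (hp : p ≠ 2) (r L' U' : ℕ) (hr : r < 4) (hr0 : r ≠ 0) (hL : 1 ≤ L') :
    |∑ n ∈ (Icc L' U').filter (fun n => n % 4 = r ∧ Squarefree n), legendreSym p (n : ℤ)|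
      ≤ 4 * p * Nat.sqrt U' := by
  set χ : ℕ → ℤ := fun n => legendreSym p (n : ℤ) with hχ
  set F := (Icc L' U').filter (fun n => n % 4 = r) with hF
  set A := Icc 1 (Nat.sqrt U') with hA
  have step1 : ∑ n ∈ (Icc L' U').filter (fun n => n % 4 = r ∧ Squarefree n), χ n
      = ∑ n ∈ F, (if Squarefree n then χ n else 0) := by
    rw [← Finset.sum_filter, hF, Finset.filter_filter]
  have step2 : ∀ n ∈ F, (if Squarefree n then χ n else 0)
      = ∑ a ∈ A, (if a ^ 2 ∣ n then μ a * χ n else 0) := by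
    intro n hn
    simp only [hF, mem_filter, mem_Icc] at hn
    obtain ⟨⟨hn1, hn2⟩, -⟩ := hn
    have hsets : A.filter (fun a => a ^ 2 ∣ n) = (Icc 1 n).filter (fun a => a ^ 2 ∣ n) := by
      ext a
      simp only [hA, mem_filter, mem_Icc]
      constructor
      · rintro ⟨⟨h1, _⟩, h3⟩
        refine ⟨⟨h1, ?_⟩, h3⟩
        calc a ≤ a ^ 2 := by nlinarith
          _ ≤ n := Nat.le_of_dvd (by omega) h3
      · rintro ⟨⟨h1, _⟩, h3⟩
        refine ⟨⟨h1, Nat.le_sqrt.mpr ?_⟩, h3⟩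
        have : a ^ 2 ≤ n := Nat.le_of_dvd (by omega) h3
        nlinarith
    have := moebius_sq_sum n (by omega)
    rw [← hsets] at this
    have hsum : ∑ a ∈ A, (if a ^ 2 ∣ n then μ a * χ n else 0)
        = (∑ a ∈ A.filter (fun a => a ^ 2 ∣ n), μ a) * χ n := by
      rw [← Finset.sum_filter, Finset.sum_mul]
    rw [hsum, this]
    split <;> simp
  rw [hχ] at step1 ⊢
  rw [step1, Finset.sum_congr rfl step2, Finset.sum_comm]
  have inner_bound : ∀ a ∈ A, |∑ n ∈ F, (if a ^ 2 ∣ n then μ a * χ n else 0)| ≤ 4 * p := by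
    intro a ha
    simp only [hA, mem_Icc] at ha
    have ha1 : 1 ≤ a := ha.1
    have hsum2 : ∑ n ∈ F, (if a ^ 2 ∣ n then μ a * χ n else 0)
        = μ a * ∑ n ∈ F.filter (fun n => a ^ 2 ∣ n), χ n := by
      rw [← Finset.sum_filter, Finset.mul_sum]
    rw [hsum2, abs_mul]
    have hμ : |μ a| ≤ 1 := by
      by_cases hsq : Squarefree a
      · rw [abs_moebius_eq_one_of_squarefree hsq]
      · rw [moebius_eq_zero_of_not_squarefree hsq]; norm_num
    rcases Nat.even_or_odd a with he | ho
    · -- a even : the filtered set is empty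
      have : F.filter (fun n => a ^ 2 ∣ n) = ∅ := by
        rw [Finset.eq_empty_iff_forall_notMem]
        intro n hn
        simp only [hF, mem_filter, mem_Icc] at hn
        obtain ⟨⟨-, hmod⟩, hdvd⟩ := hn
        obtain ⟨k, hk⟩ := he
        have h4 : (4 : ℕ) ∣ n := dvd_trans ⟨k * k, by rw [hk]; ring⟩ hdvd
        omega
      rw [this]
      simp only [Finset.sum_empty, abs_zero, mul_zero]
      positivity
    · -- a odd : reindex by m ↦ a² m
      obtain ⟨j, hj⟩ := ho
      have ha2 : 0 < a ^ 2 := by positivity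
      have ha4 : a ^ 2 % 4 = 1 := by
        have : a ^ 2 = 4 * (j * j + j) + 1 := by rw [hj]; ring
        omega
      set cl := (L' - 1) / a ^ 2 + 1 with hcl
      set fl := U' / a ^ 2 with hfl
      have himg : F.filter (fun n => a ^ 2 ∣ n)
          = (Ico cl (fl + 1) |>.filter (fun m => m % 4 = r)).image (fun m => a ^ 2 * m) := by
        ext n
        simp only [hF, mem_filter, mem_Icc, mem_image, mem_Ico]
        constructor
        · rintro ⟨⟨⟨h1, h2⟩, h3⟩, h4⟩
          obtain ⟨m, rfl⟩ := h4
          have hcomm : a ^ 2 * m = m * a ^ 2 := mul_comm _ _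
          refine ⟨m, ⟨⟨?_, ?_⟩, ?_⟩, rfl⟩
          · rw [hcl, Nat.add_one_le_iff, Nat.div_lt_iff_lt_mul ha2]
            omega
          · rw [hfl, Nat.lt_add_one_iff, Nat.le_div_iff_mul_le ha2]; omega
          · rw [Nat.mul_mod, ha4] at h3; omega
        · rintro ⟨m, ⟨⟨h1, h2⟩, h3⟩, rfl⟩
          rw [hcl, Nat.add_one_le_iff, Nat.div_lt_iff_lt_mul ha2] at h1
          rw [hfl, Nat.lt_add_one_iff, Nat.le_div_iff_mul_le ha2] at h2
          have hcomm : a ^ 2 * m = m * a ^ 2 := mul_comm _ _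
          refine ⟨⟨⟨by omega, by omega⟩, ?_⟩, Dvd.intro m rfl⟩
          rw [Nat.mul_mod, ha4]; omega
      rw [himg, Finset.sum_image (by intro x _ y _ h; exact Nat.eq_of_mul_eq_mul_left ha2 h)]
      have hmul : ∀ m, χ (a ^ 2 * m) = legendreSym p ((a : ℤ) ^ 2) * χ m := by
        intro m
        rw [hχ]
        push_cast
        rw [← legendreSym.mul]
      simp_rw [hmul]
      rw [← Finset.mul_sum, abs_mul]
      have h1 : |legendreSym p ((a : ℤ) ^ 2)| ≤ 1 := leg_abs_le_one _
      have h2 : |∑ m ∈ (Ico cl (fl + 1)).filter (fun m => m % 4 = r), χ m| ≤ 4 * p :=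
        ap_sum_bound hp r hr cl (fl + 1)
      calc |μ a| * (|legendreSym p ((a:ℤ)^2)|
            * |∑ m ∈ (Ico cl (fl+1)).filter (fun m => m % 4 = r), χ m|)
          ≤ 1 * (1 * (4 * (p : ℤ))) := by
            gcongr
        _ = 4 * p := by ring
  calc |∑ a ∈ A, ∑ n ∈ F, (if a ^ 2 ∣ n then μ a * χ n else 0)|
      ≤ ∑ a ∈ A, |∑ n ∈ F, (if a ^ 2 ∣ n then μ a * χ n else 0)| :=
        Finset.abs_sum_le_sum_abs _ _
    _ ≤ ∑ _a ∈ A, (4 * (p : ℤ)) := Finset.sum_le_sum inner_bound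
    _ = (Nat.sqrt U' : ℤ) * (4 * p) := by
        rw [Finset.sum_const, Nat.card_Icc]; simp [hA]
    _ = 4 * p * Nat.sqrt U' := by ring

lemma combine_abs (e c s3 s1 s2 B : ℤ) (he : |e| ≤ 1) (hc : |c| ≤ 1) (_hB : 0 ≤ B)
    (h3 : |s3| ≤ B) (h1 : |s1| ≤ B) (h2 : |s2| ≤ B) :
    |e * (s3 + c * (s1 + s2))| ≤ 3 * B := by
  have e1 : |e * (s3 + c * (s1 + s2))| = |e| * |s3 + c * (s1 + s2)| := abs_mul _ _
  have e2 : |s3 + c * (s1 + s2)| ≤ |s3| + |c * (s1 + s2)| := abs_add_le _ _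
  have e3 : |c * (s1 + s2)| = |c| * |s1 + s2| := abs_mul _ _
  have e4 : |s1 + s2| ≤ |s1| + |s2| := abs_add_le _ _
  nlinarith [abs_nonneg (s3 + c * (s1 + s2)), abs_nonneg (s1 + s2), abs_nonneg c,
    abs_nonneg e, abs_nonneg s1, abs_nonneg s2, abs_nonneg s3]

end Helpers

open Classical in
/-- For any odd prime `p` and any real `X ≥ 1`, the sum of the Legendre symbol
`(-D/p)` over all fundamental discriminants `-D` with `X ≤ D ≤ 2X` has absolute
value at most `32 p √X`. -/
theorem sum_legendre_fundamental_discriminants (p : ℕ) [Fact p.Prime] (hp : p ≠ 2)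
    (X : ℝ) (hX : 1 ≤ X) :
    |∑ D ∈ Finset.Icc ⌈X⌉₊ ⌊2 * X⌋₊,
        (if IsFundamentalDiscriminant (-(D : ℤ)) then
          (legendreSym p (-(D : ℤ)) : ℝ) else 0)| ≤ 32 * p * Real.sqrt X := by
  set L := ⌈X⌉₊ with hLdef
  set U := ⌊2 * X⌋₊ with hUdef
  have hL1 : 1 ≤ L := Nat.one_le_ceil_iff.mpr (by linarith)
  set χ : ℕ → ℤ := fun n => legendreSym p (n : ℤ) with hχ
  set T : ℤ := ∑ D ∈ Icc L U,
      (if IsFundamentalDiscriminant (-(D : ℤ)) then legendreSym p (-(D : ℤ)) else 0) with hT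
  have hcast : ∑ D ∈ Icc L U,
      (if IsFundamentalDiscriminant (-(D : ℤ)) then (legendreSym p (-(D : ℤ)) : ℝ) else 0)
      = (T : ℝ) := by
    rw [hT]
    push_cast
    exact Finset.sum_congr rfl fun D _ => by split <;> simp
  rw [hcast, ← Int.cast_abs]
  -- now bound |T| in ℤ by 12 * p * Nat.sqrt U
  set P : ℕ → Prop := fun D => D % 4 = 3 ∧ Squarefree D with hP
  set Q : ℕ → Prop := fun D => 4 ∣ D ∧
      ((D / 4 % 4 = 1 ∧ Squarefree (D / 4)) ∨ (D / 4 % 4 = 2 ∧ Squarefree (D / 4))) with hQ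
  have hfund : ∀ D ∈ Icc L U, IsFundamentalDiscriminant (-(D : ℤ)) ↔ (P D ∨ Q D) := by
    intro D hD
    rw [mem_Icc] at hD
    have hD1 : 1 ≤ D := le_trans hL1 hD.1
    constructor
    · rintro (⟨hsq, hmod⟩ | ⟨d, hd, hsqd, hdm⟩)
      · left
        refine ⟨by omega, ?_⟩
        have := Int.squarefree_natAbs.mpr hsq
        simpa using this
      · right
        have h4 : 4 ∣ D := by omega
        set e := D / 4 with he
        have hDe : D = 4 * e := by omega
        have hde : d = -(e : ℤ) := by omega
        refine ⟨h4, ?_⟩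
        have hsqe : Squarefree e := by
          have := Int.squarefree_natAbs.mpr hsqd
          rw [hde] at this; simpa using this
        rcases hdm with h | h
        · right; exact ⟨by omega, hsqe⟩
        · left; exact ⟨by omega, hsqe⟩
    · rintro (⟨hmod, hsq⟩ | ⟨h4, hor⟩)
      · left
        constructor
        · rw [← Int.squarefree_natAbs]; simpa using hsq
        · omega
      · right
        set e := D / 4 with he
        refine ⟨-(e : ℤ), by omega, ?_, ?_⟩
        · rw [← Int.squarefree_natAbs]
          simpa using (hor.elim (fun h => h.2) (fun h => h.2))
        · rcases hor with h | h
          · right; omega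
          · left; omega
  set ε : ℤ := legendreSym p (-1) with hε
  have hTsplit : T = ε * ∑ D ∈ Icc L U, (if P D ∨ Q D then χ D else 0) := by
    rw [hT, Finset.mul_sum]
    refine Finset.sum_congr rfl fun D hD => ?_
    rw [if_congr (hfund D hD) rfl rfl]
    have : legendreSym p (-(D : ℤ)) = ε * χ D := by
      rw [hε, hχ, ← legendreSym.mul]; norm_num
    rw [this, mul_ite, mul_zero]
  have hor_split : ∑ D ∈ Icc L U, (if P D ∨ Q D then χ D else 0)
      = (∑ D ∈ Icc L U, (if P D then χ D else 0)) + ∑ D ∈ Icc L U, (if Q D then χ D else 0) := by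
    rw [← Finset.sum_add_distrib]
    refine Finset.sum_congr rfl fun D _ => ?_
    have hdisj : ¬(P D ∧ Q D) := by rintro ⟨⟨hm, -⟩, ⟨hd, -⟩⟩; omega
    by_cases h1 : P D
    · rw [if_pos (Or.inl h1), if_pos h1, if_neg (fun h2 => hdisj ⟨h1, h2⟩), add_zero]
    · by_cases h2 : Q D
      · rw [if_pos (Or.inr h2), if_neg h1, if_pos h2, zero_add]
      · rw [if_neg (by tauto), if_neg h1, if_neg h2, add_zero]
  -- the P-part
  have hS3 : |∑ D ∈ Icc L U, (if P D then χ D else 0)| ≤ 4 * p * Nat.sqrt U := by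
    rw [← Finset.sum_filter]
    exact class_bound hp 3 L U (by norm_num) (by norm_num) hL1
  -- the Q-part : reindex D = 4 e
  set cl4 := (L - 1) / 4 + 1 with hcl4
  set fl4 := U / 4 with hfl4
  have himg4 : (Icc L U).filter (fun D => 4 ∣ D) = (Icc cl4 fl4).image (fun e => 4 * e) := by
    ext D
    simp only [mem_filter, mem_Icc, mem_image]
    constructor
    · rintro ⟨⟨h1, h2⟩, h3⟩
      exact ⟨D / 4, by omega, by omega⟩
    · rintro ⟨e, he, rfl⟩
      omega
  have hQsum : ∑ D ∈ Icc L U, (if Q D then χ D else 0)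
      = ∑ e ∈ Icc cl4 fl4, (if Q (4 * e) then χ (4 * e) else 0) := by
    rw [← Finset.sum_filter_of_ne (p := fun D => 4 ∣ D)
      (fun D _ h => by by_contra h4; rw [if_neg (fun hq => h4 hq.1)] at h; exact h rfl)]
    rw [himg4, Finset.sum_image (fun x _ y _ h => by omega)]
  set R : ℕ → ℕ → Prop := fun r e => e % 4 = r ∧ Squarefree e with hR
  have hQe : ∀ e : ℕ, Q (4 * e) ↔ (R 1 e ∨ R 2 e) := by
    intro e
    have h44 : 4 * e / 4 = e := by omega
    rw [hQ, hR]
    simp only [h44]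
    constructor
    · rintro ⟨-, h | h⟩
      · exact Or.inl h
      · exact Or.inr h
    · rintro (h | h)
      · exact ⟨⟨e, rfl⟩, Or.inl h⟩
      · exact ⟨⟨e, rfl⟩, Or.inr h⟩
  set χ4 : ℤ := legendreSym p ((4 : ℕ) : ℤ) with hχ4
  have hmul4 : ∀ e : ℕ, χ (4 * e) = χ4 * χ e := by
    intro e
    rw [hχ, hχ4]
    push_cast
    rw [← legendreSym.mul]
  have hQ2 : ∑ e ∈ Icc cl4 fl4, (if Q (4 * e) then χ (4 * e) else 0)
      = χ4 * ((∑ e ∈ Icc cl4 fl4, (if R 1 e then χ e else 0))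
          + ∑ e ∈ Icc cl4 fl4, (if R 2 e then χ e else 0)) := by
    rw [← Finset.sum_add_distrib, Finset.mul_sum]
    refine Finset.sum_congr rfl fun e _ => ?_
    rw [if_congr (hQe e) rfl rfl, hmul4 e]
    have hdisj : ¬(R 1 e ∧ R 2 e) := by rintro ⟨⟨h1, -⟩, ⟨h2, -⟩⟩; omega
    by_cases h1 : R 1 e
    · rw [if_pos (Or.inl h1), if_pos h1, if_neg (fun h2 => hdisj ⟨h1, h2⟩), add_zero]
    · by_cases h2 : R 2 e
      · rw [if_pos (Or.inr h2), if_neg h1, if_pos h2, zero_add]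
      · rw [if_neg (by tauto), if_neg h1, if_neg h2]; simp
  have hsqle : Nat.sqrt fl4 ≤ Nat.sqrt U := Nat.sqrt_le_sqrt (by omega)
  have hS12 : ∀ r : ℕ, r < 4 → r ≠ 0 →
      |∑ e ∈ Icc cl4 fl4, (if R r e then χ e else 0)| ≤ 4 * p * Nat.sqrt U := by
    intro r h1 h2
    rw [← Finset.sum_filter]
    calc |∑ e ∈ (Icc cl4 fl4).filter (fun e => R r e), χ e| ≤ 4 * p * Nat.sqrt fl4 :=
          class_bound hp r cl4 fl4 h1 h2 (by omega)
      _ ≤ 4 * p * Nat.sqrt U := by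
          have : (Nat.sqrt fl4 : ℤ) ≤ (Nat.sqrt U : ℤ) := by exact_mod_cast hsqle
          nlinarith [Int.ofNat_nonneg p]
  -- combine
  have hTbound : |T| ≤ 12 * p * Nat.sqrt U := by
    rw [hTsplit, hor_split, hQsum, hQ2]
    have hε1 : |ε| ≤ 1 := leg_abs_le_one _
    have hχ41 : |χ4| ≤ 1 := leg_abs_le_one _
    have hBpos : (0 : ℤ) ≤ 4 * p * Nat.sqrt U := by positivity
    calc |ε * ((∑ D ∈ Icc L U, (if P D then χ D else 0))
          + χ4 * ((∑ e ∈ Icc cl4 fl4, (if R 1 e then χ e else 0))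
            + ∑ e ∈ Icc cl4 fl4, (if R 2 e then χ e else 0)))|
        ≤ 3 * (4 * p * Nat.sqrt U) :=
          combine_abs _ _ _ _ _ _ hε1 hχ41 hBpos hS3
            (hS12 1 (by norm_num) (by norm_num)) (hS12 2 (by norm_num) (by norm_num))
      _ = 12 * p * Nat.sqrt U := by ring
  -- numeric conclusion over ℝ
  have hX0 : (0 : ℝ) ≤ X := by linarith
  have hsX : (0 : ℝ) ≤ Real.sqrt X := Real.sqrt_nonneg X
  have hsqrtU : (Nat.sqrt U : ℝ) ≤ 2 * Real.sqrt X := by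
    have h1 : ((Nat.sqrt U : ℝ)) ^ 2 ≤ 2 * X := by
      have h2 : (Nat.sqrt U * Nat.sqrt U : ℕ) ≤ U := Nat.sqrt_le U
      have h3 : (U : ℝ) ≤ 2 * X := Nat.floor_le (by linarith)
      have h4 : ((Nat.sqrt U * Nat.sqrt U : ℕ) : ℝ) ≤ (U : ℝ) := by exact_mod_cast h2
      push_cast at h4
      nlinarith
    have h5 : (Nat.sqrt U : ℝ) ≤ Real.sqrt (2 * X) := by
      rw [Real.le_sqrt (Nat.cast_nonneg _) (by linarith)]
      exact h1
    calc (Nat.sqrt U : ℝ) ≤ Real.sqrt (2 * X) := h5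
      _ ≤ Real.sqrt (4 * X) := Real.sqrt_le_sqrt (by linarith)
      _ = 2 * Real.sqrt X := by
          rw [show (4 : ℝ) * X = (2 * Real.sqrt X) ^ 2 by
            rw [mul_pow, Real.sq_sqrt hX0]; ring]
          exact Real.sqrt_sq (by positivity)
  have hfinal : ((|T| : ℤ) : ℝ) ≤ 32 * p * Real.sqrt X := by
    have h6 : ((|T| : ℤ) : ℝ) ≤ ((12 * p * Nat.sqrt U : ℤ) : ℝ) := by exact_mod_cast hTbound
    have hpprime : p.Prime := Fact.out
    have hp1 : (1 : ℝ) ≤ p := by exact_mod_cast hpprime.one_lt.le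
    calc ((|T| : ℤ) : ℝ) ≤ ((12 * p * Nat.sqrt U : ℤ) : ℝ) := h6
      _ = 12 * p * (Nat.sqrt U : ℝ) := by push_cast; ring
      _ ≤ 12 * p * (2 * Real.sqrt X) := by
          apply mul_le_mul_of_nonneg_left hsqrtU (by positivity)
      _ ≤ 32 * p * Real.sqrt X := by nlinarith
  exact hfinal
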